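/- Let ψ₁ be a Schwartz function on ℝ with 0 ≤ ψ₁ ≤ 1 and support a compact subset of (0,1), let ψ(y) = ψ₁(y) − ψ₁(−y), and let Ψ(x,ξ₁,ξ₂,ξ₃) = ψ(x)ψ(ξ₂)ψ(ξ₃)ψ(ξ₁−ξ₂−2ξ₃). Let σ(y) = πi·sign(y) and σ_TH(x,ξ₁,ξ₂,ξ₃) = σ(ξ₁−ξ₂−2ξ₃). Then for all x, t₁, t₂, t₃, ξ₁, ξ₂, ξ₃, ν ∈ ℝ: |𝒱_Ψ σ_TH(x, t₁, t₂, t₃, ξ₁, ξ₂, ξ₃, ν)| = |ψ̂(ν)| · |ψ̂(t₁+t₂)| · |ψ̂(2t₁+t₃)| · |∫_ℝ σ(u) e^{2πi u t₁} ψ(u − (ξ₁−ξ₂−2ξ₃)) du|, where ψ̂(η) = ∫_ℝ ψ(y) e^{−2πi y η} dy. -/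

import Mathlib

open MeasureTheory Complex
open scoped ENNReal NNReal

noncomputable section

/-- `e2pi a = e^{2πi a}`. -/
def e2pi (a : ℝ) : ℂ := Complex.exp (2 * Real.pi * Complex.I * (a : ℂ))

/-- Short-time Fourier transform on `ℝ`: `V_φ f (t, ν)`. -/
def STFT1 (φ f : ℝ → ℂ) (t ν : ℝ) : ℂ := ∫ y : ℝ, f y * e2pi (-(y * ν)) * φ (y - t)

/-- The Gaussian window `e^{-x²}` on `ℝ`. -/
def gauss1 : ℝ → ℂ := fun x => (Real.exp (-x ^ 2) : ℝ)

/-- `L^p`-type norm (`ℝ≥0∞`-valued) with essential supremum in case `p = ∞`. -/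
def eNorm {α : Type*} [MeasurableSpace α] (μ : Measure α) (p : ℝ≥0∞) (F : α → ℝ≥0∞) : ℝ≥0∞ :=
  if p = ∞ then essSup F μ else (∫⁻ a, F a ^ p.toReal ∂μ) ^ (1 / p.toReal)

/-- Modulation space norm `‖f‖_{M^{p,q}}` on `ℝ` with the Gaussian window. -/
def modNorm1 (p q : ℝ≥0∞) (f : ℝ → ℂ) : ℝ≥0∞ :=
  eNorm volume q fun ν => eNorm volume p fun t => (‖STFT1 gauss1 f t ν‖₊ : ℝ≥0∞)

/-- Fourier transform on `ℝ`. -/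
def FT1 (f : ℝ → ℂ) (ξ : ℝ) : ℂ := ∫ y : ℝ, f y * e2pi (-(y * ξ))

/-- Symbol short-time Fourier transform of a symbol on `ℝ³`. -/
def symbSTFT3 (Ψ σ : ℝ × ℝ × ℝ → ℂ) (x t₁ t₂ ξ₁ ξ₂ ν : ℝ) : ℂ :=
  ∫ X : ℝ × ℝ × ℝ, σ X * Ψ (X.1 - x, X.2.1 - ξ₁, X.2.2 - ξ₂) *
    e2pi (-(X.1 * ν - t₁ * X.2.1 - t₂ * X.2.2))

/-- Symbol short-time Fourier transform of a symbol on `ℝ⁴`. -/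
def symbSTFT4 (Ψ σ : ℝ × ℝ × ℝ × ℝ → ℂ) (x t₁ t₂ t₃ ξ₁ ξ₂ ξ₃ ν : ℝ) : ℂ :=
  ∫ X : ℝ × ℝ × ℝ × ℝ, σ X * Ψ (X.1 - x, X.2.1 - ξ₁, X.2.2.1 - ξ₂, X.2.2.2 - ξ₃) *
    e2pi (-(X.1 * ν - t₁ * X.2.1 - t₂ * X.2.2.1 - t₃ * X.2.2.2))

/-- The bilinear Hilbert transform as an (absolutely convergent) bilinear Fourier
multiplier for Schwartz functions. -/
def BH (f g : ℝ → ℂ) (x : ℝ) : ℂ :=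
  ∫ ξ : ℝ × ℝ, (-(Real.pi : ℂ) * Complex.I * (Real.sign (ξ.1 - ξ.2) : ℝ)) *
    FT1 f ξ.1 * FT1 g ξ.2 * e2pi (x * (ξ.1 + ξ.2))

/-- The trilinear Hilbert transform as an (absolutely convergent) trilinear Fourier
multiplier for Schwartz functions. -/
def TH (f g h : ℝ → ℂ) (x : ℝ) : ℂ :=
  ∫ ξ : ℝ × ℝ × ℝ, ((Real.pi : ℂ) * Complex.I * (Real.sign (ξ.1 - ξ.2.1 - 2 * ξ.2.2) : ℝ)) *
    FT1 f ξ.1 * FT1 g ξ.2.1 * FT1 h ξ.2.2 * e2pi (x * (ξ.1 + ξ.2.1 + ξ.2.2))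

lemma e2pi_add (a b : ℝ) : e2pi (a + b) = e2pi a * e2pi b := by
  rw [e2pi, e2pi, e2pi, ← Complex.exp_add]
  push_cast
  ring_nf

lemma norm_e2pi (a : ℝ) : ‖e2pi a‖ = 1 := by
  rw [e2pi, Complex.norm_exp]
  norm_num [Complex.mul_re, Complex.mul_im]

def shearE : (ℝ × ℝ × ℝ) ≃ᵐ (ℝ × ℝ × ℝ) where
  toFun := fun z => (z.1 + (z.2.1 + 2 * z.2.2), z.2)
  invFun := fun z => (z.1 - (z.2.1 + 2 * z.2.2), z.2)
  left_inv := fun z => by simp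
  right_inv := fun z => by simp
  measurable_toFun := by
    show Measurable fun z : ℝ × ℝ × ℝ => (z.1 + (z.2.1 + 2 * z.2.2), z.2)
    fun_prop
  measurable_invFun := by
    show Measurable fun z : ℝ × ℝ × ℝ => (z.1 - (z.2.1 + 2 * z.2.2), z.2)
    fun_prop

lemma shear_mp : MeasurePreserving (fun z : ℝ × ℝ × ℝ => (z.1 + (z.2.1 + 2 * z.2.2), z.2))
    (volume : Measure (ℝ × ℝ × ℝ)) volume := by
  have hS' : MeasurePreserving
      (fun p : (ℝ × ℝ) × ℝ => (p.1, p.2 + (p.1.1 + 2 * p.1.2)))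
      ((volume : Measure (ℝ × ℝ)).prod (volume : Measure ℝ))
      ((volume : Measure (ℝ × ℝ)).prod (volume : Measure ℝ)) := by
    refine (MeasurePreserving.id _).skew_product
      (g := fun (y : ℝ × ℝ) (u : ℝ) => u + (y.1 + 2 * y.2)) ?_ ?_
    · fun_prop
    · exact Filter.Eventually.of_forall fun y =>
        (measurePreserving_add_right volume (y.1 + 2 * y.2)).map_eq
  have h := (Measure.measurePreserving_swap.comp hS').comp
    (Measure.measurePreserving_swap (μ := (volume : Measure ℝ)) (ν := (volume : Measure (ℝ × ℝ))))
  rw [show (volume : Measure (ℝ × ℝ × ℝ)) = (volume : Measure ℝ).prod volume from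
    (Measure.volume_eq_prod _ _)]
  exact h

/-- factorization of the symbol STFT of the trilinear Hilbert transform
symbol `σ_TH(x,ξ₁,ξ₂,ξ₃) = πi·sign(ξ₁−ξ₂−2ξ₃)` with respect to the window
`Ψ(x,ξ₁,ξ₂,ξ₃) = ψ(x)ψ(ξ₂)ψ(ξ₃)ψ(ξ₁−ξ₂−2ξ₃)`. -/
theorem stmt17 (ψ₁ : SchwartzMap ℝ ℝ)
    (hpos : ∀ y, 0 ≤ ψ₁ y) (hle : ∀ y, ψ₁ y ≤ 1)
    (hsupp : tsupport (⇑ψ₁) ⊆ Set.Ioo 0 1)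
    (ψ : ℝ → ℂ) (hψ : ψ = fun y => ((ψ₁ y - ψ₁ (-y) : ℝ) : ℂ))
    (Ψ : ℝ × ℝ × ℝ × ℝ → ℂ)
    (hΨ : Ψ = fun X => ψ X.1 * ψ X.2.2.1 * ψ X.2.2.2 * ψ (X.2.1 - X.2.2.1 - 2 * X.2.2.2))
    (σ : ℝ → ℂ) (hσ : σ = fun y => (Real.pi : ℂ) * Complex.I * (Real.sign y : ℝ))
    (σTH : ℝ × ℝ × ℝ × ℝ → ℂ) (hσTH : σTH = fun X => σ (X.2.1 - X.2.2.1 - 2 * X.2.2.2))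
    (x t₁ t₂ t₃ ξ₁ ξ₂ ξ₃ ν : ℝ) :
    ‖symbSTFT4 Ψ σTH x t₁ t₂ t₃ ξ₁ ξ₂ ξ₃ ν‖
      = ‖∫ y : ℝ, ψ y * e2pi (-(y * ν))‖ *
        ‖∫ y : ℝ, ψ y * e2pi (-(y * (t₁ + t₂)))‖ *
        ‖∫ y : ℝ, ψ y * e2pi (-(y * (2 * t₁ + t₃)))‖ *
        ‖∫ u : ℝ, σ u * e2pi (u * t₁) * ψ (u - (ξ₁ - ξ₂ - 2 * ξ₃))‖ := by
  have hodd : ∀ y : ℝ, ψ (-y) = - ψ y := by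
    intro y; simp only [hψ, neg_neg]; push_cast; ring
  -- the four 1-dimensional building blocks
  set A : ℝ → ℂ := fun a => ψ (a - x) * e2pi (-(a * ν)) with hAdef
  set C : ℝ → ℂ := fun u => σ u * e2pi (u * t₁) * ψ (u - (ξ₁ - ξ₂ - 2 * ξ₃)) with hCdef
  set D : ℝ → ℂ := fun a => ψ (a - ξ₂) * e2pi (a * (t₁ + t₂)) with hDdef
  set E : ℝ → ℂ := fun b => ψ (b - ξ₃) * e2pi (b * (2 * t₁ + t₃)) with hEdef
  set B : ℝ × ℝ × ℝ → ℂ := fun Y =>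
    σ (Y.1 - Y.2.1 - 2 * Y.2.2) *
      (ψ (Y.2.1 - ξ₂) * ψ (Y.2.2 - ξ₃) *
        ψ (Y.1 - ξ₁ - (Y.2.1 - ξ₂) - 2 * (Y.2.2 - ξ₃))) *
      e2pi (t₁ * Y.1 + t₂ * Y.2.1 + t₃ * Y.2.2) with hBdef
  have h1 : symbSTFT4 Ψ σTH x t₁ t₂ t₃ ξ₁ ξ₂ ξ₃ ν
      = (∫ a : ℝ, A a) * ∫ Y : ℝ × ℝ × ℝ, B Y := by
    rw [show (∫ a : ℝ, A a) * ∫ Y : ℝ × ℝ × ℝ, B Y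
        = ∫ X : ℝ × (ℝ × ℝ × ℝ), A X.1 * B X.2 from
      (integral_prod_mul (μ := (volume : Measure ℝ))
        (ν := (volume : Measure (ℝ × ℝ × ℝ))) A B).symm]
    rw [symbSTFT4]
    congr 1; funext X
    simp only [hσTH, hΨ, hAdef, hBdef]
    rw [show -(X.1 * ν - t₁ * X.2.1 - t₂ * X.2.2.1 - t₃ * X.2.2.2)
        = -(X.1 * ν) + (t₁ * X.2.1 + t₂ * X.2.2.1 + t₃ * X.2.2.2) by ring, e2pi_add]
    rw [show X.2.1 - ξ₁ - (X.2.2.1 - ξ₂) - 2 * (X.2.2.2 - ξ₃)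
        = X.2.1 - X.2.2.1 - 2 * X.2.2.2 - (ξ₁ - ξ₂ - 2 * ξ₃) by ring]
    ring
  have h2 : (∫ Y : ℝ × ℝ × ℝ, B Y)
      = (∫ u : ℝ, C u) * ((∫ a : ℝ, D a) * ∫ b : ℝ, E b) := by
    rw [← MeasurePreserving.integral_comp shear_mp shearE.measurableEmbedding B]
    have hpt : ∀ z : ℝ × ℝ × ℝ,
        B (z.1 + (z.2.1 + 2 * z.2.2), z.2) = C z.1 * (D z.2.1 * E z.2.2) := by
      intro z
      simp only [hBdef, hCdef, hDdef, hEdef]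
      rw [show z.1 + (z.2.1 + 2 * z.2.2) - z.2.1 - 2 * z.2.2 = z.1 by ring]
      rw [show z.1 + (z.2.1 + 2 * z.2.2) - ξ₁ - (z.2.1 - ξ₂) - 2 * (z.2.2 - ξ₃)
          = z.1 - (ξ₁ - ξ₂ - 2 * ξ₃) by ring]
      rw [show t₁ * (z.1 + (z.2.1 + 2 * z.2.2)) + t₂ * z.2.1 + t₃ * z.2.2
          = z.1 * t₁ + (z.2.1 * (t₁ + t₂) + z.2.2 * (2 * t₁ + t₃)) by ring]
      rw [e2pi_add, e2pi_add]
      ring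
    calc (∫ z : ℝ × ℝ × ℝ, B (z.1 + (z.2.1 + 2 * z.2.2), z.2))
        = ∫ z : ℝ × ℝ × ℝ, C z.1 * ((fun y : ℝ × ℝ => D y.1 * E y.2) z.2) := by
          congr 1; funext z; exact hpt z
      _ = (∫ u : ℝ, C u) * ∫ y : ℝ × ℝ, D y.1 * E y.2 :=
          integral_prod_mul (μ := (volume : Measure ℝ))
            (ν := (volume : Measure (ℝ × ℝ))) C (fun y : ℝ × ℝ => D y.1 * E y.2)
      _ = (∫ u : ℝ, C u) * ((∫ a : ℝ, D a) * ∫ b : ℝ, E b) := by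
          congr 1
          exact integral_prod_mul (μ := (volume : Measure ℝ)) (ν := (volume : Measure ℝ)) D E
  have hA : (∫ a : ℝ, A a) = (∫ y : ℝ, ψ y * e2pi (-(y * ν))) * e2pi (-(x * ν)) := by
    rw [← integral_add_right_eq_self A x, ← integral_mul_const]
    congr 1; funext y
    simp only [hAdef, add_sub_cancel_right]
    rw [show -((y + x) * ν) = -(y * ν) + -(x * ν) by ring, e2pi_add]
    ring
  have hOdd : ∀ c : ℝ, (∫ y : ℝ, ψ y * e2pi (y * c))
      = - ∫ y : ℝ, ψ y * e2pi (-(y * c)) := by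
    intro c
    rw [← integral_neg_eq_self (fun y : ℝ => ψ y * e2pi (y * c)) volume, ← integral_neg]
    congr 1; funext y
    simp only [hodd, neg_mul]
    try ring
  have hD : (∫ a : ℝ, D a)
      = (- ∫ y : ℝ, ψ y * e2pi (-(y * (t₁ + t₂)))) * e2pi (ξ₂ * (t₁ + t₂)) := by
    rw [← hOdd, ← integral_add_right_eq_self D ξ₂, ← integral_mul_const]
    congr 1; funext y
    simp only [hDdef, add_sub_cancel_right]
    rw [show (y + ξ₂) * (t₁ + t₂) = y * (t₁ + t₂) + ξ₂ * (t₁ + t₂) by ring, e2pi_add]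
    try ring
  have hE : (∫ b : ℝ, E b)
      = (- ∫ y : ℝ, ψ y * e2pi (-(y * (2 * t₁ + t₃)))) * e2pi (ξ₃ * (2 * t₁ + t₃)) := by
    rw [← hOdd, ← integral_add_right_eq_self E ξ₃, ← integral_mul_const]
    congr 1; funext y
    simp only [hEdef, add_sub_cancel_right]
    rw [show (y + ξ₃) * (2 * t₁ + t₃) = y * (2 * t₁ + t₃) + ξ₃ * (2 * t₁ + t₃) by ring,
      e2pi_add]
    try ring
  rw [h1, h2, hA, hD, hE]
  simp only [norm_mul, norm_neg, norm_e2pi, mul_one]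
  ring

end
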